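/- Suppose the aggregation map φ satisfies the Boltzmann-similarity condition: φ(s1) = φ(s2) implies, for all a ∈ A1×A2, |e^{Q*(s1,a)}/Σ_{b∈A1×A2} e^{Q*(s1,b)} − e^{Q*(s2,a)}/Σ_{b} e^{Q*(s2,b)}| ≤ ε and |Σ_{b} e^{Q*(s1,b)} − Σ_{b} e^{Q*(s2,b)}| ≤ k·ε, for some ε ≥ 0 and k ≥ 0. Then the ground policy profile π_GA* induced by a Nash equilibrium π_A* of the abstract game satisfies GAP(π_GA*) ≤ 12·e^{2/(1−γ)}·(|A1||A2| + k·e^{1/(1−γ)}/(|A1||A2|))·ε/(1−γ)³. -/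

import Mathlib

open Finset

/-- A mixed Markov policy: a probability distribution over actions at each state. -/
def IsPolicy {S A : Type*} [Fintype A] (π : S → A → ℝ) : Prop :=
  (∀ s a, 0 ≤ π s a) ∧ ∀ s, ∑ a, π s a = 1

/-- A transition kernel: a probability distribution over next states for every
state and joint action. -/
def IsKernel {S A1 A2 : Type*} [Fintype S] (P : S → A1 → A2 → S → ℝ) : Prop :=
  (∀ s a1 a2 s', 0 ≤ P s a1 a2 s') ∧ ∀ s a1 a2, ∑ s', P s a1 a2 s' = 1

/-- Rewards lie in `[0,1]`. -/
def IsReward {S A1 A2 : Type*} (R : S → A1 → A2 → ℝ) : Prop :=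
  ∀ s a1 a2, 0 ≤ R s a1 a2 ∧ R s a1 a2 ≤ 1

/-- The state-action value induced by a state value function `V`:
`Q(s,a) = R(s,a) + γ * Σ_{s'} P(s'|s,a) V(s')`. -/
def Qf {S A1 A2 : Type*} [Fintype S] (R : S → A1 → A2 → ℝ) (P : S → A1 → A2 → S → ℝ)
    (γ : ℝ) (V : S → ℝ) (s : S) (a1 : A1) (a2 : A2) : ℝ :=
  R s a1 a2 + γ * ∑ s', P s a1 a2 s' * V s'

/-- `V` satisfies the Bellman equation for the policy profile `(π1, π2)`. -/
def IsValue {S A1 A2 : Type*} [Fintype S] [Fintype A1] [Fintype A2]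
    (R : S → A1 → A2 → ℝ) (P : S → A1 → A2 → S → ℝ) (γ : ℝ)
    (π1 : S → A1 → ℝ) (π2 : S → A2 → ℝ) (V : S → ℝ) : Prop :=
  ∀ s, V s = ∑ a1, ∑ a2, π1 s a1 * π2 s a2 * Qf R P γ V s a1 a2

/-- `Val` assigns to every policy profile its value function. -/
def IsValueOperator {S A1 A2 : Type*} [Fintype S] [Fintype A1] [Fintype A2]
    (R : S → A1 → A2 → ℝ) (P : S → A1 → A2 → S → ℝ) (γ : ℝ)
    (Val : (S → A1 → ℝ) → (S → A2 → ℝ) → S → ℝ) : Prop :=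
  ∀ π1 π2, IsPolicy π1 → IsPolicy π2 → IsValue R P γ π1 π2 (Val π1 π2)

/-- `(π1, π2)` is a Nash equilibrium of the game whose values are given by `Val`:
for all states `s` and all policies `π1'`, `π2'`,
`Val π1 π2' s ≥ Val π1 π2 s ≥ Val π1' π2 s`. -/
def IsNash {S A1 A2 : Type*} [Fintype A1] [Fintype A2]
    (Val : (S → A1 → ℝ) → (S → A2 → ℝ) → S → ℝ)
    (π1 : S → A1 → ℝ) (π2 : S → A2 → ℝ) : Prop :=
  IsPolicy π1 ∧ IsPolicy π2 ∧
    ∀ s, ∀ π1' π2', IsPolicy π1' → IsPolicy π2' →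
      Val π1 π2' s ≥ Val π1 π2 s ∧ Val π1 π2 s ≥ Val π1' π2 s

/-- `π1d` is a best response for player 1 against the player-2 policy `π2`:
`Val π1d π2 s = max_{π1} Val π1 π2 s` for every state `s`. -/
def IsBestResponse1 {S A1 A2 : Type*} [Fintype A1]
    (Val : (S → A1 → ℝ) → (S → A2 → ℝ) → S → ℝ)
    (π1d : S → A1 → ℝ) (π2 : S → A2 → ℝ) : Prop :=
  IsPolicy π1d ∧ ∀ π1, IsPolicy π1 → ∀ s, Val π1 π2 s ≤ Val π1d π2 s

/-- A weight function for the aggregation map `φ`: weights lie in `[0,1]` and sum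
to one within each aggregated class. -/
def IsAggWeight {S SA : Type*} [Fintype S] [DecidableEq SA] (φ : S → SA) (w : S → ℝ) : Prop :=
  (∀ s, 0 ≤ w s ∧ w s ≤ 1) ∧ ∀ sA : SA, ∑ s ∈ univ.filter (fun s => φ s = sA), w s = 1

/-- The abstract transition kernel:
`P_A(s_A'|s_A,a) = Σ_{s : φ s = s_A} Σ_{s' : φ s' = s_A'} P(s'|s,a) w(s)`. -/
def PA {S SA A1 A2 : Type*} [Fintype S] [DecidableEq SA]
    (P : S → A1 → A2 → S → ℝ) (φ : S → SA) (w : S → ℝ)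
    (sA : SA) (a1 : A1) (a2 : A2) (sA' : SA) : ℝ :=
  ∑ s ∈ univ.filter (fun s => φ s = sA),
    ∑ s' ∈ univ.filter (fun s' => φ s' = sA'), P s a1 a2 s' * w s

/-- The abstract reward function:
`R_A(s_A,a) = Σ_{s : φ s = s_A} R(s,a) w(s)`. -/
def RA {S SA A1 A2 : Type*} [Fintype S] [DecidableEq SA]
    (R : S → A1 → A2 → ℝ) (φ : S → SA) (w : S → ℝ)
    (sA : SA) (a1 : A1) (a2 : A2) : ℝ :=
  ∑ s ∈ univ.filter (fun s => φ s = sA), R s a1 a2 * w s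

section Aux
variable {S A1 A2 : Type*} [Fintype S] [Fintype A1] [Fintype A2]
variable {R : S → A1 → A2 → ℝ} {P : S → A1 → A2 → S → ℝ} {γ : ℝ}

lemma zsg_sum_prob_mul_const {p1 : A1 → ℝ} {p2 : A2 → ℝ}
    (s1 : ∑ a, p1 a = 1) (s2 : ∑ a, p2 a = 1) (c : ℝ) :
    ∑ a1, ∑ a2, p1 a1 * p2 a2 * c = c := by
  have h : ∀ a1, ∑ a2, p1 a1 * p2 a2 * c = p1 a1 * c := by
    intro a1
    calc ∑ a2, p1 a1 * p2 a2 * c = (∑ a2, p2 a2) * (p1 a1 * c) := by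
          rw [Finset.sum_mul]; exact Finset.sum_congr rfl fun a2 _ => by ring
      _ = p1 a1 * c := by rw [s2, one_mul]
  simp_rw [h]
  rw [← Finset.sum_mul, s1, one_mul]

lemma zsg_sum_prob_mul_mono {p1 : A1 → ℝ} {p2 : A2 → ℝ}
    (h1 : ∀ a, 0 ≤ p1 a) (h2 : ∀ a, 0 ≤ p2 a)
    {f g : A1 → A2 → ℝ} (hfg : ∀ a1 a2, f a1 a2 ≤ g a1 a2) :
    ∑ a1, ∑ a2, p1 a1 * p2 a2 * f a1 a2 ≤ ∑ a1, ∑ a2, p1 a1 * p2 a2 * g a1 a2 :=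
  Finset.sum_le_sum fun a1 _ => Finset.sum_le_sum fun a2 _ =>
    mul_le_mul_of_nonneg_left (hfg a1 a2) (mul_nonneg (h1 a1) (h2 a2))

/-- Averaged one-step values change by at most `γ·N` when `V` is replaced by `W`
with `V - W ≤ N` pointwise. -/
lemma zsg_sum_prob_Qf_le {p1 : A1 → ℝ} {p2 : A2 → ℝ}
    (h1 : ∀ a, 0 ≤ p1 a) (h2 : ∀ a, 0 ≤ p2 a)
    (s1 : ∑ a, p1 a = 1) (s2 : ∑ a, p2 a = 1)
    (hP : IsKernel P) (hγ0 : 0 ≤ γ)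
    {V W : S → ℝ} {N : ℝ} (h : ∀ t, V t - W t ≤ N) (s : S) :
    ∑ a1, ∑ a2, p1 a1 * p2 a2 * Qf R P γ V s a1 a2
      ≤ (∑ a1, ∑ a2, p1 a1 * p2 a2 * Qf R P γ W s a1 a2) + γ * N := by
  have key : ∀ a1 a2, Qf R P γ V s a1 a2 ≤ Qf R P γ W s a1 a2 + γ * N := by
    intro a1 a2
    unfold Qf
    have hs : ∑ s', P s a1 a2 s' * V s' ≤ ∑ s', P s a1 a2 s' * W s' + N := by
      have : ∑ s', P s a1 a2 s' * V s' ≤ ∑ s', (P s a1 a2 s' * W s' + P s a1 a2 s' * N) :=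
        Finset.sum_le_sum fun s' _ => by nlinarith [hP.1 s a1 a2 s', h s']
      rw [Finset.sum_add_distrib, ← Finset.sum_mul, hP.2 s a1 a2, one_mul] at this
      exact this
    nlinarith
  calc ∑ a1, ∑ a2, p1 a1 * p2 a2 * Qf R P γ V s a1 a2
      ≤ ∑ a1, ∑ a2, p1 a1 * p2 a2 * (Qf R P γ W s a1 a2 + γ * N) :=
        zsg_sum_prob_mul_mono h1 h2 key
    _ = (∑ a1, ∑ a2, p1 a1 * p2 a2 * Qf R P γ W s a1 a2) + γ * N := by
        simp_rw [mul_add, Finset.sum_add_distrib]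
        rw [zsg_sum_prob_mul_const s1 s2]

lemma zsg_value_bounds [Nonempty S] (hR : IsReward R) (hP : IsKernel P)
    (hγ0 : 0 ≤ γ) (hγ1 : γ < 1) {π1 : S → A1 → ℝ} {π2 : S → A2 → ℝ} {V : S → ℝ}
    (h1 : IsPolicy π1) (h2 : IsPolicy π2) (hV : IsValue R P γ π1 π2 V) :
    ∀ s, 0 ≤ V s ∧ V s ≤ 1 / (1 - γ) := by
  have hγ' : 0 < 1 - γ := by linarith
  obtain ⟨sM, -, hsM⟩ := Finset.exists_max_image univ V univ_nonempty
  obtain ⟨sm, -, hsm⟩ := Finset.exists_max_image univ (fun s => -V s) univ_nonempty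
  have hM : ∀ s, V s ≤ V sM := fun s => hsM s (mem_univ s)
  have hm : ∀ s, V sm ≤ V s := fun s => by have := hsm s (mem_univ s); linarith
  have hMub : V sM ≤ 1 + γ * V sM := by
    have hub : ∀ a1 a2, Qf R P γ V sM a1 a2 ≤ 1 + γ * V sM := by
      intro a1 a2
      unfold Qf
      have hs : ∑ s', P sM a1 a2 s' * V s' ≤ V sM := by
        calc ∑ s', P sM a1 a2 s' * V s' ≤ ∑ s', P sM a1 a2 s' * V sM :=
              Finset.sum_le_sum fun s' _ =>
                mul_le_mul_of_nonneg_left (hM s') (hP.1 sM a1 a2 s')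
          _ = V sM := by rw [← Finset.sum_mul, hP.2, one_mul]
      nlinarith [(hR sM a1 a2).2]
    calc V sM = ∑ a1, ∑ a2, π1 sM a1 * π2 sM a2 * Qf R P γ V sM a1 a2 := hV sM
      _ ≤ ∑ a1, ∑ a2, π1 sM a1 * π2 sM a2 * (1 + γ * V sM) :=
          zsg_sum_prob_mul_mono (h1.1 sM) (h2.1 sM) hub
      _ = 1 + γ * V sM := zsg_sum_prob_mul_const (h1.2 sM) (h2.2 sM) _
  have hmlb : γ * V sm ≤ V sm := by
    have hlb : ∀ a1 a2, γ * V sm ≤ Qf R P γ V sm a1 a2 := by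
      intro a1 a2
      unfold Qf
      have hs : V sm ≤ ∑ s', P sm a1 a2 s' * V s' := by
        calc V sm = ∑ s', P sm a1 a2 s' * V sm := by rw [← Finset.sum_mul, hP.2, one_mul]
          _ ≤ ∑ s', P sm a1 a2 s' * V s' :=
              Finset.sum_le_sum fun s' _ =>
                mul_le_mul_of_nonneg_left (hm s') (hP.1 sm a1 a2 s')
      nlinarith [(hR sm a1 a2).1]
    calc γ * V sm = ∑ a1, ∑ a2, π1 sm a1 * π2 sm a2 * (γ * V sm) :=
          (zsg_sum_prob_mul_const (h1.2 sm) (h2.2 sm) _).symm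
      _ ≤ ∑ a1, ∑ a2, π1 sm a1 * π2 sm a2 * Qf R P γ V sm a1 a2 :=
          zsg_sum_prob_mul_mono (h1.1 sm) (h2.1 sm) hlb
      _ = V sm := (hV sm).symm
  have hMfin : V sM ≤ 1 / (1 - γ) := by
    rw [le_div_iff₀ hγ']; nlinarith
  have hmfin : 0 ≤ V sm := by nlinarith
  exact fun s => ⟨le_trans hmfin (hm s), le_trans (hM s) hMfin⟩

/-- Fixed-point comparison, upper version. -/
lemma zsg_fixedpoint_le [Nonempty S] (hP : IsKernel P) (hγ0 : 0 ≤ γ) (hγ1 : γ < 1)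
    {π1 : S → A1 → ℝ} {π2 : S → A2 → ℝ} {V' V : S → ℝ} {c : ℝ}
    (h1 : IsPolicy π1) (h2 : IsPolicy π2) (hV' : IsValue R P γ π1 π2 V') (hc : 0 ≤ c)
    (h : ∀ s, ∑ a1, ∑ a2, π1 s a1 * π2 s a2 * Qf R P γ V s a1 a2 ≤ V s + c) :
    ∀ s, V' s ≤ V s + c / (1 - γ) := by
  have hγ' : 0 < 1 - γ := by linarith
  obtain ⟨s₀, -, hs₀⟩ := Finset.exists_max_image univ (fun s => V' s - V s) univ_nonempty
  have hNmax : ∀ t, V' t - V t ≤ V' s₀ - V s₀ := fun t => hs₀ t (mem_univ t)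
  have hkey : V' s₀ - V s₀ ≤ c / (1 - γ) := by
    have : V' s₀ ≤ V s₀ + c + γ * (V' s₀ - V s₀) := by
      calc V' s₀ = ∑ a1, ∑ a2, π1 s₀ a1 * π2 s₀ a2 * Qf R P γ V' s₀ a1 a2 := hV' s₀
        _ ≤ (∑ a1, ∑ a2, π1 s₀ a1 * π2 s₀ a2 * Qf R P γ V s₀ a1 a2) + γ * (V' s₀ - V s₀) :=
            zsg_sum_prob_Qf_le (h1.1 s₀) (h2.1 s₀) (h1.2 s₀) (h2.2 s₀) hP hγ0 hNmax s₀
        _ ≤ V s₀ + c + γ * (V' s₀ - V s₀) := by linarith [h s₀]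
    rw [le_div_iff₀ hγ']; nlinarith
  intro s
  have := le_trans (hNmax s) hkey
  linarith

/-- Fixed-point comparison, lower version. -/
lemma zsg_fixedpoint_ge [Nonempty S] (hP : IsKernel P) (hγ0 : 0 ≤ γ) (hγ1 : γ < 1)
    {π1 : S → A1 → ℝ} {π2 : S → A2 → ℝ} {V' V : S → ℝ} {c : ℝ}
    (h1 : IsPolicy π1) (h2 : IsPolicy π2) (hV' : IsValue R P γ π1 π2 V') (hc : 0 ≤ c)
    (h : ∀ s, V s - c ≤ ∑ a1, ∑ a2, π1 s a1 * π2 s a2 * Qf R P γ V s a1 a2) :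
    ∀ s, V s - c / (1 - γ) ≤ V' s := by
  have hγ' : 0 < 1 - γ := by linarith
  obtain ⟨s₀, -, hs₀⟩ := Finset.exists_max_image univ (fun s => V s - V' s) univ_nonempty
  have hNmax : ∀ t, V t - V' t ≤ V s₀ - V' s₀ := fun t => hs₀ t (mem_univ t)
  have hkey : V s₀ - V' s₀ ≤ c / (1 - γ) := by
    have : V s₀ - c ≤ V' s₀ + γ * (V s₀ - V' s₀) := by
      calc V s₀ - c ≤ ∑ a1, ∑ a2, π1 s₀ a1 * π2 s₀ a2 * Qf R P γ V s₀ a1 a2 := h s₀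
        _ ≤ (∑ a1, ∑ a2, π1 s₀ a1 * π2 s₀ a2 * Qf R P γ V' s₀ a1 a2) + γ * (V s₀ - V' s₀) :=
            zsg_sum_prob_Qf_le (h1.1 s₀) (h2.1 s₀) (h1.2 s₀) (h2.2 s₀) hP hγ0 hNmax s₀
        _ = V' s₀ + γ * (V s₀ - V' s₀) := by rw [← hV' s₀]
    rw [le_div_iff₀ hγ']; nlinarith
  intro s
  have := le_trans (hNmax s) hkey
  linarith

/-- One-step security of the Nash profile for player 2: no distribution μ for
player 1 beats the Nash value in the matrix game `Q*(s,·)`. -/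
lemma zsg_nash_security_2 [Nonempty S] (hP : IsKernel P) (hγ0 : 0 ≤ γ) (hγ1 : γ < 1)
    {Val : (S → A1 → ℝ) → (S → A2 → ℝ) → S → ℝ} (hVal : IsValueOperator R P γ Val)
    {π1 : S → A1 → ℝ} {π2 : S → A2 → ℝ} (hN : IsNash Val π1 π2) (s : S) (μ : A1 → ℝ)
    (hμ0 : ∀ a, 0 ≤ μ a) (hμ1 : ∑ a, μ a = 1) :
    ∑ a1, ∑ a2, μ a1 * π2 s a2 * Qf R P γ (Val π1 π2) s a1 a2 ≤ Val π1 π2 s := by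
  classical
  obtain ⟨h1, h2, hNE⟩ := hN
  set V := Val π1 π2 with hVdef
  set π1' : S → A1 → ℝ := fun t => if t = s then μ else π1 t with hπ1'
  have h1' : IsPolicy π1' := by
    constructor
    · intro t a; by_cases h : t = s <;> simp [hπ1', h, hμ0, h1.1]
    · intro t; by_cases h : t = s <;> simp [hπ1', h, hμ1, h1.2]
  set V' := Val π1' π2 with hV'def
  have hBell : IsValue R P γ π1 π2 V := hVal π1 π2 h1 h2
  have hBell' : IsValue R P γ π1' π2 V' := hVal π1' π2 h1' h2
  have hle : ∀ t, V' t ≤ V t := fun t => (hNE t π1' π2 h1' h2).2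
  obtain ⟨t₀, -, ht₀⟩ := Finset.exists_max_image univ (fun t => V t - V' t) univ_nonempty
  set N := V t₀ - V' t₀ with hNdef
  have hNmax : ∀ t, V t - V' t ≤ N := fun t => ht₀ t (mem_univ t)
  have hN0 : 0 ≤ N := by have := hle t₀; rw [hNdef]; linarith
  have hrec : ∀ t, t ≠ s → V t - V' t ≤ γ * N := by
    intro t ht
    have e2 : V' t = ∑ a1, ∑ a2, π1 t a1 * π2 t a2 * Qf R P γ V' t a1 a2 := by
      have := hBell' t; simpa [hπ1', ht] using this
    have := zsg_sum_prob_Qf_le (R := R) (h1.1 t) (h2.1 t) (h1.2 t) (h2.2 t) hP hγ0 hNmax t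
    rw [← hBell t, ← e2] at this
    linarith
  have key : γ * N ≤ V s - V' s := by
    by_cases h : t₀ = s
    · have hNs : N = V s - V' s := by rw [hNdef, h]
      nlinarith
    · have h0 := hrec t₀ h
      have : N ≤ γ * N := by rw [hNdef] at *; linarith
      have hN0' : N = 0 := by nlinarith
      rw [hN0', mul_zero]
      linarith [hle s]
  have e3 : V' s = ∑ a1, ∑ a2, μ a1 * π2 s a2 * Qf R P γ V' s a1 a2 := by
    have := hBell' s; simpa [hπ1'] using this
  have := zsg_sum_prob_Qf_le (R := R) hμ0 (h2.1 s) hμ1 (h2.2 s) hP hγ0 hNmax s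
  rw [← e3] at this
  linarith

/-- One-step security of the Nash profile for player 1. -/
lemma zsg_nash_security_1 [Nonempty S] (hP : IsKernel P) (hγ0 : 0 ≤ γ) (hγ1 : γ < 1)
    {Val : (S → A1 → ℝ) → (S → A2 → ℝ) → S → ℝ} (hVal : IsValueOperator R P γ Val)
    {π1 : S → A1 → ℝ} {π2 : S → A2 → ℝ} (hN : IsNash Val π1 π2) (s : S) (ν : A2 → ℝ)
    (hν0 : ∀ a, 0 ≤ ν a) (hν1 : ∑ a, ν a = 1) :
    Val π1 π2 s ≤ ∑ a1, ∑ a2, π1 s a1 * ν a2 * Qf R P γ (Val π1 π2) s a1 a2 := by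
  classical
  obtain ⟨h1, h2, hNE⟩ := hN
  set V := Val π1 π2 with hVdef
  set π2' : S → A2 → ℝ := fun t => if t = s then ν else π2 t with hπ2'
  have h2' : IsPolicy π2' := by
    constructor
    · intro t a; by_cases h : t = s <;> simp [hπ2', h, hν0, h2.1]
    · intro t; by_cases h : t = s <;> simp [hπ2', h, hν1, h2.2]
  set V' := Val π1 π2' with hV'def
  have hBell : IsValue R P γ π1 π2 V := hVal π1 π2 h1 h2
  have hBell' : IsValue R P γ π1 π2' V' := hVal π1 π2' h1 h2'
  have hle : ∀ t, V t ≤ V' t := fun t => (hNE t π1 π2' h1 h2').1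
  obtain ⟨t₀, -, ht₀⟩ := Finset.exists_max_image univ (fun t => V' t - V t) univ_nonempty
  set N := V' t₀ - V t₀ with hNdef
  have hNmax : ∀ t, V' t - V t ≤ N := fun t => ht₀ t (mem_univ t)
  have hN0 : 0 ≤ N := by have := hle t₀; rw [hNdef]; linarith
  have hrec : ∀ t, t ≠ s → V' t - V t ≤ γ * N := by
    intro t ht
    have e2 : V' t = ∑ a1, ∑ a2, π1 t a1 * π2 t a2 * Qf R P γ V' t a1 a2 := by
      have := hBell' t; simpa [hπ2', ht] using this
    have := zsg_sum_prob_Qf_le (R := R) (h1.1 t) (h2.1 t) (h1.2 t) (h2.2 t) hP hγ0 hNmax t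
    rw [← hBell t, ← e2] at this
    linarith
  have key : γ * N ≤ V' s - V s := by
    by_cases h : t₀ = s
    · have hNs : N = V' s - V s := by rw [hNdef, h]
      nlinarith
    · have h0 := hrec t₀ h
      have : N ≤ γ * N := by rw [hNdef] at *; linarith
      have hN0' : N = 0 := by nlinarith
      rw [hN0', mul_zero]
      linarith [hle s]
  have e3 : V' s = ∑ a1, ∑ a2, π1 s a1 * ν a2 * Qf R P γ V' s a1 a2 := by
    have := hBell' s; simpa [hπ2'] using this
  have := zsg_sum_prob_Qf_le (R := R) (h1.1 s) hν0 (h1.2 s) hν1 hP hγ0 hNmax s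
  rw [← e3] at this
  linarith

lemma zsg_double_sum_fac {p1 : A1 → ℝ} {p2 : A2 → ℝ} (Q : A1 → A2 → ℝ) :
    ∑ a1, ∑ a2, p1 a1 * p2 a2 * Q a1 a2 = ∑ a1, p1 a1 * ∑ a2, p2 a2 * Q a1 a2 := by
  refine Finset.sum_congr rfl fun a1 _ => ?_
  rw [Finset.mul_sum]
  exact Finset.sum_congr rfl fun a2 _ => by ring

lemma zsg_double_sum_swap {p1 : A1 → ℝ} {p2 : A2 → ℝ} (Q : A1 → A2 → ℝ) :
    ∑ a1, ∑ a2, p1 a1 * p2 a2 * Q a1 a2 = ∑ a2, p2 a2 * ∑ a1, p1 a1 * Q a1 a2 := by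
  rw [Finset.sum_comm]
  refine Finset.sum_congr rfl fun a2 _ => ?_
  rw [Finset.mul_sum]
  exact Finset.sum_congr rfl fun a1 _ => by ring

lemma zsg_abs_Qf_sub_le (hP : IsKernel P) (hγ0 : 0 ≤ γ)
    {V W : S → ℝ} {N : ℝ} (h : ∀ t, |V t - W t| ≤ N) (s : S) (a1 : A1) (a2 : A2) :
    |Qf R P γ V s a1 a2 - Qf R P γ W s a1 a2| ≤ γ * N := by
  unfold Qf
  have e : R s a1 a2 + γ * ∑ s', P s a1 a2 s' * V s'
      - (R s a1 a2 + γ * ∑ s', P s a1 a2 s' * W s')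
      = γ * ∑ s', P s a1 a2 s' * (V s' - W s') := by
    have h0 : (∑ s', P s a1 a2 s' * V s') - ∑ s', P s a1 a2 s' * W s'
        = ∑ s', P s a1 a2 s' * (V s' - W s') := by
      rw [← Finset.sum_sub_distrib]
      exact Finset.sum_congr rfl fun s' _ => (mul_sub _ _ _).symm
    rw [← h0]; ring
  rw [e, abs_mul, abs_of_nonneg hγ0]
  refine mul_le_mul_of_nonneg_left ?_ hγ0
  calc |∑ s', P s a1 a2 s' * (V s' - W s')| ≤ ∑ s', |P s a1 a2 s' * (V s' - W s')| :=
        Finset.abs_sum_le_sum_abs _ _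
    _ ≤ ∑ s', P s a1 a2 s' * N := Finset.sum_le_sum fun s' _ => by
        rw [abs_mul, abs_of_nonneg (hP.1 s a1 a2 s')]
        exact mul_le_mul_of_nonneg_left (h s') (hP.1 s a1 a2 s')
    _ = N := by rw [← Finset.sum_mul, hP.2, one_mul]

lemma zsg_abs_sub_le_abs_exp_sub {x y : ℝ} (hx : 0 ≤ x) (hy : 0 ≤ y) :
    |x - y| ≤ |Real.exp x - Real.exp y| := by
  have key : ∀ u v : ℝ, 0 ≤ v → v ≤ u → u - v ≤ Real.exp u - Real.exp v := by
    intro u v hv huv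
    have h1 : (u - v) + 1 ≤ Real.exp (u - v) := Real.add_one_le_exp _
    have h2 : (1 : ℝ) ≤ Real.exp v := Real.one_le_exp hv
    have h3 : Real.exp u = Real.exp v * Real.exp (u - v) := by
      rw [← Real.exp_add]; ring_nf
    nlinarith [Real.exp_pos v]
  rcases le_total y x with h | h
  · rw [abs_of_nonneg (by linarith), abs_of_nonneg
      (by linarith [key x y hy h] : (0:ℝ) ≤ Real.exp x - Real.exp y)]
    exact key x y hy h
  · rw [abs_of_nonpos (by linarith), abs_of_nonpos
      (by linarith [key y x hx h] : Real.exp x - Real.exp y ≤ 0)]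
    linarith [key y x hx h]

end Aux




section Agg
variable {S SA A1 A2 : Type*} [Fintype S] [Fintype SA] [DecidableEq SA]
variable {R : S → A1 → A2 → ℝ} {P : S → A1 → A2 → S → ℝ} {γ : ℝ}
variable {φ : S → SA} {w : S → ℝ}

lemma zsg_PA_collapse (g : S) (a1 : A1) (a2 : A2) (U : SA → ℝ) :
    ∑ sA' : SA, (∑ s' ∈ univ.filter (fun s' => φ s' = sA'), P g a1 a2 s' * w g) * U sA'
      = ∑ s', P g a1 a2 s' * w g * U (φ s') := by
  rw [← Finset.sum_fiberwise univ φ (fun s' => P g a1 a2 s' * w g * U (φ s'))]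
  refine Finset.sum_congr rfl fun sA' _ => ?_
  rw [Finset.sum_mul]
  refine Finset.sum_congr rfl fun s' hs' => ?_
  rw [(Finset.mem_filter.mp hs').2]

lemma zsg_Qf_RA_PA (U : SA → ℝ) (sA : SA) (a1 : A1) (a2 : A2) :
    Qf (RA R φ w) (PA P φ w) γ U sA a1 a2
      = ∑ g ∈ univ.filter (fun s => φ s = sA),
          w g * Qf R P γ (fun s => U (φ s)) g a1 a2 := by
  unfold Qf RA PA
  have step1 : ∑ sA' : SA, (∑ g ∈ univ.filter (fun s => φ s = sA),
        ∑ s' ∈ univ.filter (fun s' => φ s' = sA'), P g a1 a2 s' * w g) * U sA'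
      = ∑ g ∈ univ.filter (fun s => φ s = sA), ∑ s', P g a1 a2 s' * w g * U (φ s') := by
    simp_rw [Finset.sum_mul]
    rw [Finset.sum_comm]
    refine Finset.sum_congr rfl fun g _ => ?_
    rw [← zsg_PA_collapse g a1 a2 U]
    refine Finset.sum_congr rfl fun sA' _ => ?_
    rw [Finset.sum_mul]
  rw [step1, Finset.mul_sum, ← Finset.sum_add_distrib]
  refine Finset.sum_congr rfl fun g _ => ?_
  have h0 : ∑ s', P g a1 a2 s' * w g * U (φ s') = w g * ∑ s', P g a1 a2 s' * U (φ s') := by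
    rw [Finset.mul_sum]; exact Finset.sum_congr rfl fun s' _ => by ring
  rw [h0]; ring

lemma zsg_IsKernel_PA (hP : IsKernel P) (hw : IsAggWeight φ w) :
    IsKernel (PA P φ w) := by
  constructor
  · intro sA a1 a2 sA'
    exact Finset.sum_nonneg fun g _ => Finset.sum_nonneg fun s' _ =>
      mul_nonneg (hP.1 g a1 a2 s') (hw.1 g).1
  · intro sA a1 a2
    unfold PA
    have : ∀ sA' : SA, ∑ g ∈ univ.filter (fun s => φ s = sA),
          ∑ s' ∈ univ.filter (fun s' => φ s' = sA'), P g a1 a2 s' * w g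
        = ∑ g ∈ univ.filter (fun s => φ s = sA),
          (∑ s' ∈ univ.filter (fun s' => φ s' = sA'), P g a1 a2 s' * w g) * (1:ℝ) := by
      intro sA'; simp
    simp_rw [this]
    rw [Finset.sum_comm]
    have : ∀ g, ∑ sA' : SA,
          (∑ s' ∈ univ.filter (fun s' => φ s' = sA'), P g a1 a2 s' * w g) * (1:ℝ)
        = w g := by
      intro g
      rw [zsg_PA_collapse g a1 a2 (fun _ => (1:ℝ))]
      simp_rw [mul_one]
      rw [← Finset.sum_mul, hP.2, one_mul]
    simp_rw [this]
    exact hw.2 sA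

end Agg


set_option maxHeartbeats 1600000 in
theorem duality_gap_bound_boltzmann_similarity
    {S SA A1 A2 : Type*}
    [Fintype S] [Nonempty S] [Fintype SA] [DecidableEq SA]
    [Fintype A1] [Nonempty A1] [Fintype A2] [Nonempty A2]
    (P : S → A1 → A2 → S → ℝ) (R : S → A1 → A2 → ℝ) (γ : ℝ)
    (hP : IsKernel P) (hR : IsReward R) (hγ0 : 0 ≤ γ) (hγ1 : γ < 1)
    (Val : (S → A1 → ℝ) → (S → A2 → ℝ) → S → ℝ)
    (hVal : IsValueOperator R P γ Val)
    (φ : S → SA) (hφ : Function.Surjective φ)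
    (w : S → ℝ) (hw : IsAggWeight φ w)
    (ValA : (SA → A1 → ℝ) → (SA → A2 → ℝ) → SA → ℝ)
    (hValA : IsValueOperator (RA R φ w) (PA P φ w) γ ValA)
    (πA1 : SA → A1 → ℝ) (πA2 : SA → A2 → ℝ)
    (hNashA : IsNash ValA πA1 πA2)
    (π1s : S → A1 → ℝ) (π2s : S → A2 → ℝ)
    (hNash : IsNash Val π1s π2s)
    (ε k : ℝ) (hε : 0 ≤ ε) (hk : 0 ≤ k)
    (hagg : ∀ s1 s2 : S, φ s1 = φ s2 →
      (∀ (a1 : A1) (a2 : A2),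
        |Real.exp (Qf R P γ (Val π1s π2s) s1 a1 a2) / (∑ b1, ∑ b2, Real.exp (Qf R P γ (Val π1s π2s) s1 b1 b2))
          - Real.exp (Qf R P γ (Val π1s π2s) s2 a1 a2) / (∑ b1, ∑ b2, Real.exp (Qf R P γ (Val π1s π2s) s2 b1 b2))| ≤ ε) ∧
      |(∑ b1, ∑ b2, Real.exp (Qf R P γ (Val π1s π2s) s1 b1 b2))
        - (∑ b1, ∑ b2, Real.exp (Qf R P γ (Val π1s π2s) s2 b1 b2))| ≤ k * ε) :
    ∀ s : S, ∀ (π1' : S → A1 → ℝ) (π2' : S → A2 → ℝ), IsPolicy π1' → IsPolicy π2' →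
      Val π1' (fun s => πA2 (φ s)) s - Val (fun s => πA1 (φ s)) π2' s
        ≤ 12 * Real.exp (2 / (1 - γ)) *
            ((Fintype.card A1 : ℝ) * (Fintype.card A2 : ℝ)
              + k * Real.exp (1 / (1 - γ)) / ((Fintype.card A1 : ℝ) * (Fintype.card A2 : ℝ)))
            * ε / (1 - γ) ^ 3 := by
  classical
  have hπ1s := hNash.1
  have hπ2s := hNash.2.1
  have hπA1 := hNashA.1
  have hπA2 := hNashA.2.1
  haveI : Nonempty SA := ⟨φ (Classical.arbitrary S)⟩
  have hγ' : 0 < 1 - γ := by linarith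
  intro s π1' π2' hπ1' hπ2'
  set V : S → ℝ := Val π1s π2s with hV
  set Q : S → A1 → A2 → ℝ := Qf R P γ V with hQdef
  set VA : SA → ℝ := ValA πA1 πA2 with hVA
  set QA : SA → A1 → A2 → ℝ := Qf (RA R φ w) (PA P φ w) γ VA with hQAdef
  set Acard : ℝ := (Fintype.card A1 : ℝ) * (Fintype.card A2 : ℝ) with hAcard
  have hA1 : (1:ℝ) ≤ (Fintype.card A1 : ℝ) := by exact_mod_cast Fintype.card_pos
  have hA2 : (1:ℝ) ≤ (Fintype.card A2 : ℝ) := by exact_mod_cast Fintype.card_pos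
  have hA : (1:ℝ) ≤ Acard := by rw [hAcard]; nlinarith
  have hApos : (0:ℝ) < Acard := by linarith
  set L : ℝ := 1 / (1 - γ) with hL
  have hL1 : (1:ℝ) ≤ L := by rw [hL, le_div_iff₀ hγ']; nlinarith
  set E : ℝ := Real.exp L with hE
  have hE1 : (1:ℝ) ≤ E := Real.one_le_exp (by linarith)
  have hE0 : (0:ℝ) < E := by linarith
  set δ : ℝ := E * (Acard + k / Acard) * ε with hδ
  have hkA : 0 ≤ k / Acard := div_nonneg hk hApos.le
  have hδ0 : 0 ≤ δ := by
    rw [hδ]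
    have h0 : 0 ≤ Acard + k / Acard := by linarith
    exact mul_nonneg (mul_nonneg hE0.le h0) hε
  have hBellV : IsValue R P γ π1s π2s V := hVal π1s π2s hπ1s hπ2s
  have hVb := zsg_value_bounds hR hP hγ0 hγ1 hπ1s hπ2s hBellV
  have hLid : 1 + γ * L = L := by rw [hL]; field_simp; ring
  -- bounds on the Nash Q-values
  have hQb : ∀ t a1 a2, 0 ≤ Q t a1 a2 ∧ Q t a1 a2 ≤ L := by
    intro t a1 a2
    rw [hQdef]
    unfold Qf
    constructor
    · have h0 : 0 ≤ ∑ s', P t a1 a2 s' * V s' :=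
        Finset.sum_nonneg fun s' _ => mul_nonneg (hP.1 t a1 a2 s') (hVb s').1
      nlinarith [(hR t a1 a2).1]
    · have h0 : ∑ s', P t a1 a2 s' * V s' ≤ L := by
        calc ∑ s', P t a1 a2 s' * V s' ≤ ∑ s', P t a1 a2 s' * L :=
              Finset.sum_le_sum fun s' _ =>
                mul_le_mul_of_nonneg_left ((hVb s').2) (hP.1 t a1 a2 s')
          _ = L := by rw [← Finset.sum_mul, hP.2, one_mul]
      nlinarith [(hR t a1 a2).2, hLid]
  -- exponential bounds
  have hZlb : ∀ t : S, Acard ≤ ∑ b1, ∑ b2, Real.exp (Q t b1 b2) := by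
    intro t
    have h1 : ∑ b1 : A1, ∑ b2 : A2, (1:ℝ) ≤ ∑ b1, ∑ b2, Real.exp (Q t b1 b2) :=
      Finset.sum_le_sum fun b1 _ => Finset.sum_le_sum fun b2 _ =>
        Real.one_le_exp (hQb t b1 b2).1
    calc Acard = ∑ b1 : A1, ∑ b2 : A2, (1:ℝ) := by
          rw [hAcard]; simp [Finset.sum_const, Finset.card_univ]
      _ ≤ _ := h1
  have hZub : ∀ t : S, ∑ b1, ∑ b2, Real.exp (Q t b1 b2) ≤ Acard * E := by
    intro t
    have h1 : ∑ b1 : A1, ∑ b2 : A2, Real.exp (Q t b1 b2) ≤ ∑ b1 : A1, ∑ b2 : A2, E :=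
      Finset.sum_le_sum fun b1 _ => Finset.sum_le_sum fun b2 _ => by
        rw [hE]; exact Real.exp_le_exp.mpr (hQb t b1 b2).2
    calc ∑ b1, ∑ b2, Real.exp (Q t b1 b2) ≤ ∑ b1 : A1, ∑ b2 : A2, E := h1
      _ = Acard * E := by rw [hAcard]; simp [Finset.sum_const, Finset.card_univ]; ring
  have hexpub : ∀ t a1 a2, Real.exp (Q t a1 a2) ≤ E := fun t a1 a2 => by
    rw [hE]; exact Real.exp_le_exp.mpr (hQb t a1 a2).2
  -- within-class variation of the Nash Q-values
  have hQδ : ∀ t1 t2 : S, φ t1 = φ t2 → ∀ a1 a2, |Q t1 a1 a2 - Q t2 a1 a2| ≤ δ := by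
    intro t1 t2 hφ12 a1 a2
    obtain ⟨hp, hZ⟩ := hagg t1 t2 hφ12
    set Z1 : ℝ := ∑ b1, ∑ b2, Real.exp (Q t1 b1 b2) with hZ1
    set Z2 : ℝ := ∑ b1, ∑ b2, Real.exp (Q t2 b1 b2) with hZ2
    have hZ1pos : 0 < Z1 := lt_of_lt_of_le hApos (hZlb t1)
    have hZ2pos : 0 < Z2 := lt_of_lt_of_le hApos (hZlb t2)
    have hp2ub : Real.exp (Q t2 a1 a2) / Z2 ≤ E / Acard := by
      apply div_le_div₀ hE0.le (hexpub t2 a1 a2) hApos (hZlb t2)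
    have hp2nn : 0 ≤ Real.exp (Q t2 a1 a2) / Z2 :=
      div_nonneg (Real.exp_nonneg _) hZ2pos.le
    have key : Real.exp (Q t1 a1 a2) - Real.exp (Q t2 a1 a2)
        = (Real.exp (Q t1 a1 a2) / Z1 - Real.exp (Q t2 a1 a2) / Z2) * Z1
          + (Real.exp (Q t2 a1 a2) / Z2) * (Z1 - Z2) := by
      have e1 : Real.exp (Q t1 a1 a2) / Z1 * Z1 = Real.exp (Q t1 a1 a2) :=
        div_mul_cancel₀ _ hZ1pos.ne'
      have e2 : Real.exp (Q t2 a1 a2) / Z2 * Z2 = Real.exp (Q t2 a1 a2) :=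
        div_mul_cancel₀ _ hZ2pos.ne'
      linear_combination e2 - e1
    have habs : |Real.exp (Q t1 a1 a2) - Real.exp (Q t2 a1 a2)|
        ≤ ε * (Acard * E) + (E / Acard) * (k * ε) := by
      rw [key]
      calc |(Real.exp (Q t1 a1 a2) / Z1 - Real.exp (Q t2 a1 a2) / Z2) * Z1
            + (Real.exp (Q t2 a1 a2) / Z2) * (Z1 - Z2)|
          ≤ |(Real.exp (Q t1 a1 a2) / Z1 - Real.exp (Q t2 a1 a2) / Z2) * Z1|
            + |(Real.exp (Q t2 a1 a2) / Z2) * (Z1 - Z2)| := abs_add_le _ _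
        _ ≤ ε * (Acard * E) + (E / Acard) * (k * ε) := by
            apply add_le_add
            · rw [abs_mul, abs_of_nonneg hZ1pos.le]
              exact mul_le_mul (hp a1 a2) (hZub t1) hZ1pos.le hε
            · rw [abs_mul, abs_of_nonneg hp2nn]
              exact mul_le_mul hp2ub hZ (abs_nonneg _) (by positivity)
    have hmono := zsg_abs_sub_le_abs_exp_sub (hQb t1 a1 a2).1 (hQb t2 a1 a2).1
    have heq : ε * (Acard * E) + (E / Acard) * (k * ε) = δ := by rw [hδ]; ring
    rw [heq] at habs
    exact le_trans hmono habs
  -- abstract kernel and Bellman facts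
  have hPA : IsKernel (PA P φ w) := zsg_IsKernel_PA hP hw
  -- distance between abstract and ground values
  obtain ⟨sD, -, hsD⟩ := Finset.exists_max_image univ (fun t => |VA (φ t) - V t|) univ_nonempty
  set D : ℝ := |VA (φ sD) - V sD| with hD
  have hDmax : ∀ t, |VA (φ t) - V t| ≤ D := fun t => hsD t (mem_univ t)
  have hD0 : 0 ≤ D := abs_nonneg _
  -- approximation of abstract Q-values by ground Nash Q-values
  have h5 : ∀ t a1 a2, |QA (φ t) a1 a2 - Q t a1 a2| ≤ δ + γ * D := by
    intro t a1 a2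
    have hQconst : ∑ g ∈ univ.filter (fun x => φ x = φ t), w g * Q t a1 a2 = Q t a1 a2 := by
      rw [← Finset.sum_mul, hw.2 (φ t), one_mul]
    have hterm : ∀ g ∈ univ.filter (fun x => φ x = φ t),
        |w g * (Qf R P γ (fun x => VA (φ x)) g a1 a2 - Q t a1 a2)| ≤ w g * (δ + γ * D) := by
      intro g hg
      have hφg : φ g = φ t := (Finset.mem_filter.mp hg).2
      have hb1 : |Qf R P γ (fun x => VA (φ x)) g a1 a2 - Q g a1 a2| ≤ γ * D := by
        rw [hQdef]
        exact zsg_abs_Qf_sub_le hP hγ0 (fun x => hDmax x) g a1 a2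
      have hb2 : |Q g a1 a2 - Q t a1 a2| ≤ δ := hQδ g t hφg a1 a2
      have hb3 : |Qf R P γ (fun x => VA (φ x)) g a1 a2 - Q t a1 a2| ≤ δ + γ * D := by
        calc |Qf R P γ (fun x => VA (φ x)) g a1 a2 - Q t a1 a2|
            ≤ |Qf R P γ (fun x => VA (φ x)) g a1 a2 - Q g a1 a2| + |Q g a1 a2 - Q t a1 a2| := by
              have := abs_sub_le (Qf R P γ (fun x => VA (φ x)) g a1 a2) (Q g a1 a2) (Q t a1 a2)
              linarith
          _ ≤ δ + γ * D := by linarith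
      rw [abs_mul, abs_of_nonneg (hw.1 g).1]
      exact mul_le_mul_of_nonneg_left hb3 (hw.1 g).1
    calc |QA (φ t) a1 a2 - Q t a1 a2|
        = |∑ g ∈ univ.filter (fun x => φ x = φ t),
            w g * (Qf R P γ (fun x => VA (φ x)) g a1 a2 - Q t a1 a2)| := by
          have hsplit : ∑ g ∈ univ.filter (fun x => φ x = φ t),
              w g * (Qf R P γ (fun x => VA (φ x)) g a1 a2 - Q t a1 a2)
              = (∑ g ∈ univ.filter (fun x => φ x = φ t),
                  w g * Qf R P γ (fun x => VA (φ x)) g a1 a2) - Q t a1 a2 := by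
            simp_rw [mul_sub]
            rw [Finset.sum_sub_distrib, hQconst]
          rw [hQAdef, zsg_Qf_RA_PA, hsplit]
      _ ≤ ∑ g ∈ univ.filter (fun x => φ x = φ t),
            |w g * (Qf R P γ (fun x => VA (φ x)) g a1 a2 - Q t a1 a2)| :=
          Finset.abs_sum_le_sum_abs _ _
      _ ≤ ∑ g ∈ univ.filter (fun x => φ x = φ t), w g * (δ + γ * D) :=
          Finset.sum_le_sum hterm
      _ = δ + γ * D := by rw [← Finset.sum_mul, hw.2 (φ t), one_mul]
  -- bound on the value distance D
  have hDb : D ≤ δ / (1 - γ) := by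
    have hup : VA (φ sD) - V sD ≤ δ + γ * D := by
      have h1 := zsg_nash_security_1 hPA hγ0 hγ1 hValA hNashA (φ sD) (π2s sD)
        (hπ2s.1 sD) (hπ2s.2 sD)
      rw [← hVA, ← hQAdef] at h1
      have h2 : ∑ a1, ∑ a2, πA1 (φ sD) a1 * π2s sD a2 * QA (φ sD) a1 a2
          ≤ (∑ a1, ∑ a2, πA1 (φ sD) a1 * π2s sD a2 * Q sD a1 a2) + (δ + γ * D) := by
        calc ∑ a1, ∑ a2, πA1 (φ sD) a1 * π2s sD a2 * QA (φ sD) a1 a2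
            ≤ ∑ a1, ∑ a2, πA1 (φ sD) a1 * π2s sD a2 * (Q sD a1 a2 + (δ + γ * D)) :=
              zsg_sum_prob_mul_mono (hπA1.1 (φ sD)) (hπ2s.1 sD)
                (fun a1 a2 => by have := (abs_le.mp (h5 sD a1 a2)).2; linarith)
          _ = _ := by
              have e : ∀ (a1 : A1) (a2 : A2), πA1 (φ sD) a1 * π2s sD a2 * (Q sD a1 a2 + (δ + γ * D))
                  = πA1 (φ sD) a1 * π2s sD a2 * Q sD a1 a2
                    + πA1 (φ sD) a1 * π2s sD a2 * (δ + γ * D) := fun a1 a2 => by ring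
              simp_rw [e, Finset.sum_add_distrib]
              rw [zsg_sum_prob_mul_const (hπA1.2 (φ sD)) (hπ2s.2 sD)]
      have h3 := zsg_nash_security_2 hP hγ0 hγ1 hVal hNash sD (πA1 (φ sD))
        (hπA1.1 (φ sD)) (hπA1.2 (φ sD))
      rw [← hV, ← hQdef] at h3
      linarith
    have hlo : V sD - VA (φ sD) ≤ δ + γ * D := by
      have h1 := zsg_nash_security_1 hP hγ0 hγ1 hVal hNash sD (πA2 (φ sD))
        (hπA2.1 (φ sD)) (hπA2.2 (φ sD))
      rw [← hV, ← hQdef] at h1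
      have h2 : ∑ a1, ∑ a2, π1s sD a1 * πA2 (φ sD) a2 * Q sD a1 a2
          ≤ (∑ a1, ∑ a2, π1s sD a1 * πA2 (φ sD) a2 * QA (φ sD) a1 a2) + (δ + γ * D) := by
        calc ∑ a1, ∑ a2, π1s sD a1 * πA2 (φ sD) a2 * Q sD a1 a2
            ≤ ∑ a1, ∑ a2, π1s sD a1 * πA2 (φ sD) a2 * (QA (φ sD) a1 a2 + (δ + γ * D)) :=
              zsg_sum_prob_mul_mono (hπ1s.1 sD) (hπA2.1 (φ sD))
                (fun a1 a2 => by have := (abs_le.mp (h5 sD a1 a2)).1; linarith)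
          _ = _ := by
              have e : ∀ (a1 : A1) (a2 : A2), π1s sD a1 * πA2 (φ sD) a2 * (QA (φ sD) a1 a2 + (δ + γ * D))
                  = π1s sD a1 * πA2 (φ sD) a2 * QA (φ sD) a1 a2
                    + π1s sD a1 * πA2 (φ sD) a2 * (δ + γ * D) := fun a1 a2 => by ring
              simp_rw [e, Finset.sum_add_distrib]
              rw [zsg_sum_prob_mul_const (hπ1s.2 sD) (hπA2.2 (φ sD))]
      have h3 := zsg_nash_security_2 hPA hγ0 hγ1 hValA hNashA (φ sD) (π1s sD)
        (hπ1s.1 sD) (hπ1s.2 sD)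
      rw [← hVA, ← hQAdef] at h3
      linarith
    have hDd : D ≤ δ + γ * D := by
      rw [hD, abs_sub_le_iff]; exact ⟨hup, hlo⟩
    rw [le_div_iff₀ hγ']; nlinarith
  -- one-step security of the lifted abstract policies in the ground game
  have hsec2 : ∀ t a1, ∑ b2, πA2 (φ t) b2 * Q t a1 b2 ≤ V t + (δ + γ * D + D) := by
    intro t a1
    have hμ0 : ∀ b : A1, 0 ≤ (if b = a1 then (1:ℝ) else 0) := fun b => by
      by_cases h : b = a1 <;> simp [h]
    have hμ1 : ∑ b : A1, (if b = a1 then (1:ℝ) else 0) = 1 := by simp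
    have h1 := zsg_nash_security_2 hPA hγ0 hγ1 hValA hNashA (φ t)
      (fun b => if b = a1 then (1:ℝ) else 0) hμ0 hμ1
    rw [← hVA, ← hQAdef] at h1
    have h1' : ∑ b1, ∑ b2, (if b1 = a1 then (1:ℝ) else 0) * πA2 (φ t) b2 * QA (φ t) b1 b2
        ≤ VA (φ t) := h1
    have hcollapse : ∑ b1, ∑ b2, (if b1 = a1 then (1:ℝ) else 0) * πA2 (φ t) b2 * QA (φ t) b1 b2
        = ∑ b2, πA2 (φ t) b2 * QA (φ t) a1 b2 := by
      rw [Finset.sum_eq_single a1]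
      · exact Finset.sum_congr rfl fun b2 _ => by simp
      · intro b _ hb
        exact Finset.sum_eq_zero fun b2 _ => by simp [hb]
      · intro h; exact absurd (Finset.mem_univ a1) h
    rw [hcollapse] at h1'
    have h2 : ∑ b2, πA2 (φ t) b2 * Q t a1 b2
        ≤ (∑ b2, πA2 (φ t) b2 * QA (φ t) a1 b2) + (δ + γ * D) := by
      calc ∑ b2, πA2 (φ t) b2 * Q t a1 b2
          ≤ ∑ b2, πA2 (φ t) b2 * (QA (φ t) a1 b2 + (δ + γ * D)) :=
            Finset.sum_le_sum fun b2 _ => mul_le_mul_of_nonneg_left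
              (by have := (abs_le.mp (h5 t a1 b2)).1; linarith) (hπA2.1 (φ t) b2)
        _ = _ := by
            have e : ∀ b2 : A2, πA2 (φ t) b2 * (QA (φ t) a1 b2 + (δ + γ * D))
                = πA2 (φ t) b2 * QA (φ t) a1 b2 + πA2 (φ t) b2 * (δ + γ * D) := fun b2 => by ring
            simp_rw [e]
            rw [Finset.sum_add_distrib, ← Finset.sum_mul, hπA2.2 (φ t), one_mul]
    have h3 : VA (φ t) ≤ V t + D := by
      have := (abs_le.mp (hDmax t)).2; linarith
    linarith
  have hsec1 : ∀ t a2, V t - (δ + γ * D + D) ≤ ∑ b1, πA1 (φ t) b1 * Q t b1 a2 := by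
    intro t a2
    have hν0 : ∀ b : A2, 0 ≤ (if b = a2 then (1:ℝ) else 0) := fun b => by
      by_cases h : b = a2 <;> simp [h]
    have hν1 : ∑ b : A2, (if b = a2 then (1:ℝ) else 0) = 1 := by simp
    have h1 := zsg_nash_security_1 hPA hγ0 hγ1 hValA hNashA (φ t)
      (fun b => if b = a2 then (1:ℝ) else 0) hν0 hν1
    rw [← hVA, ← hQAdef] at h1
    have h1' : VA (φ t)
        ≤ ∑ b1, ∑ b2, πA1 (φ t) b1 * (if b2 = a2 then (1:ℝ) else 0) * QA (φ t) b1 b2 := h1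
    have hcollapse : ∑ b1, ∑ b2, πA1 (φ t) b1 * (if b2 = a2 then (1:ℝ) else 0) * QA (φ t) b1 b2
        = ∑ b1, πA1 (φ t) b1 * QA (φ t) b1 a2 := by
      refine Finset.sum_congr rfl fun b1 _ => ?_
      rw [Finset.sum_eq_single a2]
      · simp
      · intro b _ hb; simp [hb]
      · intro h; exact absurd (Finset.mem_univ a2) h
    rw [hcollapse] at h1'
    have h2 : ∑ b1, πA1 (φ t) b1 * QA (φ t) b1 a2
        ≤ (∑ b1, πA1 (φ t) b1 * Q t b1 a2) + (δ + γ * D) := by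
      calc ∑ b1, πA1 (φ t) b1 * QA (φ t) b1 a2
          ≤ ∑ b1, πA1 (φ t) b1 * (Q t b1 a2 + (δ + γ * D)) :=
            Finset.sum_le_sum fun b1 _ => mul_le_mul_of_nonneg_left
              (by have := (abs_le.mp (h5 t b1 a2)).2; linarith) (hπA1.1 (φ t) b1)
        _ = _ := by
            have e : ∀ b1 : A1, πA1 (φ t) b1 * (Q t b1 a2 + (δ + γ * D))
                = πA1 (φ t) b1 * Q t b1 a2 + πA1 (φ t) b1 * (δ + γ * D) := fun b1 => by ring
            simp_rw [e]
            rw [Finset.sum_add_distrib, ← Finset.sum_mul, hπA1.2 (φ t), one_mul]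
    have h3 : V t - D ≤ VA (φ t) := by
      have := (abs_le.mp (hDmax t)).1; linarith
    linarith
  -- fixed-point comparison for the deviating policies
  have hπ2Gp : IsPolicy (fun x : S => πA2 (φ x)) :=
    ⟨fun x a => hπA2.1 (φ x) a, fun x => hπA2.2 (φ x)⟩
  have hπ1Gp : IsPolicy (fun x : S => πA1 (φ x)) :=
    ⟨fun x a => hπA1.1 (φ x) a, fun x => hπA1.2 (φ x)⟩
  have hcval0 : 0 ≤ δ + γ * D + D := by nlinarith [mul_nonneg hγ0 hD0]
  have hstep7 : ∀ t, ∑ a1, ∑ a2, π1' t a1 * πA2 (φ t) a2 * Q t a1 a2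
      ≤ V t + (δ + γ * D + D) := by
    intro t
    rw [zsg_double_sum_fac]
    calc ∑ a1, π1' t a1 * ∑ a2, πA2 (φ t) a2 * Q t a1 a2
        ≤ ∑ a1, π1' t a1 * (V t + (δ + γ * D + D)) :=
          Finset.sum_le_sum fun a1 _ =>
            mul_le_mul_of_nonneg_left (hsec2 t a1) (hπ1'.1 t a1)
      _ = V t + (δ + γ * D + D) := by rw [← Finset.sum_mul, hπ1'.2 t, one_mul]
  have hstep7' : ∀ t, V t - (δ + γ * D + D)
      ≤ ∑ a1, ∑ a2, πA1 (φ t) a1 * π2' t a2 * Q t a1 a2 := by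
    intro t
    rw [zsg_double_sum_swap]
    calc V t - (δ + γ * D + D)
        = ∑ a2, π2' t a2 * (V t - (δ + γ * D + D)) := by
          rw [← Finset.sum_mul, hπ2'.2 t, one_mul]
      _ ≤ ∑ a2, π2' t a2 * ∑ a1, πA1 (φ t) a1 * Q t a1 a2 :=
          Finset.sum_le_sum fun a2 _ =>
            mul_le_mul_of_nonneg_left (hsec1 t a2) (hπ2'.1 t a2)
  have hup2 : ∀ t, Val π1' (fun x => πA2 (φ x)) t ≤ V t + (δ + γ * D + D) / (1 - γ) :=
    zsg_fixedpoint_le (π1 := π1') (π2 := fun x => πA2 (φ x)) hP hγ0 hγ1 hπ1' hπ2Gp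
      (hVal π1' _ hπ1' hπ2Gp) hcval0 hstep7
  have hlo2 : ∀ t, V t - (δ + γ * D + D) / (1 - γ) ≤ Val (fun x => πA1 (φ x)) π2' t :=
    zsg_fixedpoint_ge (π1 := fun x => πA1 (φ x)) (π2 := π2') hP hγ0 hγ1 hπ1Gp hπ2'
      (hVal _ π2' hπ1Gp hπ2') hcval0 hstep7'
  have hgap : Val π1' (fun x => πA2 (φ x)) s - Val (fun x => πA1 (φ x)) π2' s
      ≤ 2 * ((δ + γ * D + D) / (1 - γ)) := by
    have h1 := hup2 s
    have h2 := hlo2 s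
    linarith
  clear_value D δ E L Acard QA VA Q V
  -- final arithmetic
  have hE2 : Real.exp (2 / (1 - γ)) = E * E := by
    rw [hE, hL, ← Real.exp_add]
    congr 1
    ring
  have hDδ : D * (1 - γ) ≤ δ := by
    have := hDb; rw [le_div_iff₀ hγ'] at this; linarith
  have h1 : (δ + γ * D + D) * (1 - γ) ≤ 2 * δ := by
    nlinarith [mul_le_mul_of_nonneg_left hDδ (by linarith : (0:ℝ) ≤ 1 + γ), hδ0]
  have t1 : E * Acard ≤ 3 * (E * E) * Acard := by
    nlinarith [mul_nonneg (mul_nonneg (by linarith : (0:ℝ) ≤ 3 * E - 1) hE0.le) hApos.le]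
  have t2 : E * (k / Acard) ≤ 3 * (E * E) * (k * E / Acard) := by
    have he : k * E / Acard = (k / Acard) * E := by ring
    rw [he]
    nlinarith [mul_nonneg (mul_nonneg
      (by nlinarith : (0:ℝ) ≤ 3 * E * E - 1) hE0.le) hkA]
  have t3 : E * (Acard + k / Acard) ≤ 3 * (E * E) * (Acard + k * E / Acard) := by
    nlinarith [t1, t2]
  have hδub : δ ≤ 3 * (E * E) * (Acard + k * E / Acard) * ε := by
    rw [hδ]
    exact mul_le_mul_of_nonneg_right t3 hε
  have key0 : 4 * δ * (1 - γ) ≤ 12 * (E * E) * (Acard + k * E / Acard) * ε := by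
    nlinarith [hδub, mul_nonneg hδ0 hγ0]
  rw [hE2]
  have hgoal2 : 2 * ((δ + γ * D + D) / (1 - γ))
      ≤ 12 * (E * E) * (Acard + k * E / Acard) * ε / (1 - γ) ^ 3 := by
    rw [show 2 * ((δ + γ * D + D) / (1 - γ)) = 2 * (δ + γ * D + D) / (1 - γ) from by ring]
    rw [div_le_div_iff₀ hγ' (by positivity)]
    nlinarith [mul_le_mul_of_nonneg_right h1 (by positivity : (0:ℝ) ≤ (1 - γ) ^ 2),
      mul_le_mul_of_nonneg_right key0 hγ'.le]
  linarith [hgap, hgoal2]
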